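/- For every solution of the delayed Hegselmann–Krause system and all t ≥ τ, one has max_{i} |ẋ_i(t)| ≤ d_x(t−τ) + ∫_{t−τ}^{t−σ} max_{i} |ẋ_i(s)| ds. -/

import Mathlib

open scoped BigOperators
open MeasureTheory

/-- Diameter of the agent configuration at time `t`. -/
noncomputable def hkDiam {N d : ℕ} (x : Fin N → ℝ → EuclideanSpace ℝ (Fin d)) (t : ℝ) : ℝ :=
  ⨆ i : Fin N, ⨆ j : Fin N, ‖x i t - x j t‖

/-- Maximum of the norms of the derivatives at time `t`. -/
noncomputable def hkMaxDer {N d : ℕ} (x' : Fin N → ℝ → EuclideanSpace ℝ (Fin d)) (t : ℝ) : ℝ :=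
  ⨆ i : Fin N, ‖x' i t‖

theorem stmt_2
    (N d : ℕ) (hN : 2 ≤ N) (hd : 1 ≤ d)
    (σ τ : ℝ) (hσ : 0 ≤ σ) (hστ : σ ≤ τ) (hτ : 0 < τ)
    (ψ : ℝ → ℝ)
    (hψpos : ∀ s, 0 ≤ s → 0 < ψ s)
    (hψcont : ContinuousOn ψ (Set.Ici 0))
    (hψmono : ∀ s t, 0 ≤ s → s ≤ t → ψ t ≤ ψ s)
    (hψbdd : ∀ s, 0 ≤ s → ψ s ≤ 1)
    (x x' : Fin N → ℝ → EuclideanSpace ℝ (Fin d))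
    (hxc : ∀ i, ContinuousOn (x i) (Set.Ici (-τ)))
    (hder : ∀ i, ∀ t > (0:ℝ), HasDerivAt (x i) (x' i t) t)
    (hode : ∀ i, ∀ t > (0:ℝ),
      x' i t = ∑ j ∈ Finset.univ.erase i,
        (ψ ‖x i (t - σ) - x j (t - τ)‖ / (N - 1)) • (x j (t - τ) - x i (t - σ))) :
    ∀ t, τ ≤ t →
      hkMaxDer x' t ≤ hkDiam x (t - τ) + ∫ s in (t - τ)..(t - σ), hkMaxDer x' s := by
  intro t ht
  haveI : Nonempty (Fin N) := ⟨⟨0, by omega⟩⟩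
  set a := t - τ with ha
  set b := t - σ with hb
  have hab : a ≤ b := by simp only [ha, hb]; linarith
  have ha0 : 0 ≤ a := by simp only [ha]; linarith
  have hN1 : (1:ℝ) ≤ (N:ℝ) - 1 := by
    have : (2:ℝ) ≤ (N:ℝ) := by exact_mod_cast hN
    linarith
  have hN1pos : (0:ℝ) < (N:ℝ) - 1 := by linarith
  -- the right-hand side formula
  set f : Fin N → ℝ → EuclideanSpace ℝ (Fin d) := fun i s =>
    ∑ j ∈ Finset.univ.erase i,
      (ψ ‖x i (s - σ) - x j (s - τ)‖ / (N - 1)) • (x j (s - τ) - x i (s - σ)) with hfdef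
  have hfx' : ∀ i : Fin N, ∀ s, 0 < s → x' i s = f i s := fun i s hs => hode i s hs
  -- continuity of f i on Ici 0
  have hshift : ∀ c : ℝ, c ≤ τ → ∀ i : Fin N,
      ContinuousOn (fun s => x i (s - c)) (Set.Ici (0:ℝ)) := by
    intro c hc i
    refine (hxc i).comp ((continuous_sub_right c).continuousOn) ?_
    intro s hs
    simp only [Set.mem_Ici] at hs ⊢
    linarith
  have hfc : ∀ i : Fin N, ContinuousOn (f i) (Set.Ici (0:ℝ)) := by
    intro i
    refine continuousOn_finset_sum _ fun j _ => ContinuousOn.fun_smul ?_ ?_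
    · refine ContinuousOn.div_const ?_ _
      refine hψcont.comp (((hshift σ hστ i).sub (hshift τ le_rfl j)).norm) ?_
      intro s _
      exact norm_nonneg _
    · exact (hshift τ le_rfl j).sub (hshift σ hστ i)
  -- the continuous majorant G
  set G : ℝ → ℝ := fun s => ⨆ i : Fin N, ‖f i s‖ with hGdef
  have hGsup' : ∀ s, G s = Finset.univ.sup' Finset.univ_nonempty (fun i => ‖f i s‖) := by
    intro s
    rw [Finset.sup'_univ_eq_ciSup]
  have hGc : ContinuousOn G (Set.Ici (0:ℝ)) := by
    have : ContinuousOn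
        (fun s => Finset.univ.sup' Finset.univ_nonempty (fun i : Fin N => ‖f i s‖))
        (Set.Ici (0:ℝ)) :=
      ContinuousOn.finset_sup'_apply Finset.univ_nonempty (fun i _ => (hfc i).norm)
    exact this.congr fun s _ => hGsup' s
  have hIccsub : Set.Icc a b ⊆ Set.Ici (0:ℝ) := fun s hs => le_trans ha0 hs.1
  have hGint : IntervalIntegrable G volume a b := by
    apply ContinuousOn.intervalIntegrable
    rw [Set.uIcc_of_le hab]
    exact hGc.mono hIccsub
  have hfint : ∀ i : Fin N, IntervalIntegrable (fun s => ‖f i s‖) volume a b := by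
    intro i
    apply ContinuousOn.intervalIntegrable
    rw [Set.uIcc_of_le hab]
    exact ((hfc i).norm).mono hIccsub
  have hbddG : ∀ s, BddAbove (Set.range fun i : Fin N => ‖f i s‖) := fun s =>
    Set.Finite.bddAbove (Set.finite_range _)
  -- x' agrees with f, hence hkMaxDer x' agrees with G, on Ioc a b
  have hmdeq : ∀ s ∈ Set.Ioc a b, hkMaxDer x' s = G s := by
    intro s hs
    have hs0 : 0 < s := lt_of_le_of_lt ha0 hs.1
    unfold hkMaxDer
    simp only [hGdef]
    congr 1
    ext i
    rw [hfx' i s hs0]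
  -- rewrite the integral on the RHS
  have hinteq : (∫ s in a..b, hkMaxDer x' s) = ∫ s in a..b, G s := by
    rw [intervalIntegral.integral_of_le hab, intervalIntegral.integral_of_le hab]
    exact setIntegral_congr_fun measurableSet_Ioc hmdeq
  set M : ℝ := hkDiam x a + ∫ s in a..b, G s with hMdef
  rw [hinteq]
  -- bound each derivative
  have key : ∀ i : Fin N, ‖x' i t‖ ≤ M := by
    intro i
    have ht0 : 0 < t := lt_of_lt_of_le hτ ht
    -- FTC for x i on [a, b]
    have hxint : IntervalIntegrable (x' i) volume a b := by
      rw [intervalIntegrable_iff_integrableOn_Ioc_of_le hab]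
      have hfi : IntegrableOn (f i) (Set.Ioc a b) volume := by
        have := hfint i
        rw [intervalIntegrable_iff_integrableOn_Ioc_of_le hab] at this
        exact (integrable_norm_iff ((((hfc i).mono
          (Set.Ioc_subset_Icc_self.trans hIccsub)).aestronglyMeasurable
          measurableSet_Ioc))).mp this
      exact IntegrableOn.congr_fun hfi
        (fun s hs => (hfx' i s (lt_of_le_of_lt ha0 hs.1)).symm) measurableSet_Ioc
    have hftc : (∫ s in a..b, x' i s) = x i b - x i a := by
      apply intervalIntegral.integral_eq_sub_of_hasDeriv_right_of_le hab
      · exact (hxc i).mono fun s hs => le_trans (by linarith : -τ ≤ (0:ℝ)) (hIccsub hs)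
      · intro s hs
        exact (hder i s (lt_of_le_of_lt ha0 hs.1)).hasDerivWithinAt
      · exact hxint
    -- bound ∫ ‖x' i‖ by ∫ G
    have hnormint : (∫ s in a..b, ‖x' i s‖) = ∫ s in a..b, ‖f i s‖ := by
      rw [intervalIntegral.integral_of_le hab, intervalIntegral.integral_of_le hab]
      refine setIntegral_congr_fun measurableSet_Ioc fun s hs => ?_
      rw [hfx' i s (lt_of_le_of_lt ha0 hs.1)]
    have hIbound : ‖x i b - x i a‖ ≤ ∫ s in a..b, G s := by
      rw [← hftc]
      calc ‖∫ s in a..b, x' i s‖ ≤ ∫ s in a..b, ‖x' i s‖ :=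
            intervalIntegral.norm_integral_le_integral_norm hab
        _ = ∫ s in a..b, ‖f i s‖ := hnormint
        _ ≤ ∫ s in a..b, G s := by
            refine intervalIntegral.integral_mono_on hab (hfint i) hGint fun s _ => ?_
            exact le_ciSup (hbddG s) i
    -- the pairwise bound
    have hpair : ∀ j : Fin N, ‖x j a - x i b‖ ≤ M := by
      intro j
      have h1 : ‖x j a - x i a‖ ≤ hkDiam x a := by
        unfold hkDiam
        have hbdd1 : BddAbove (Set.range fun i' : Fin N =>
            ⨆ j' : Fin N, ‖x i' a - x j' a‖) := Set.Finite.bddAbove (Set.finite_range _)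
        refine le_ciSup_of_le hbdd1 j ?_
        exact le_ciSup (f := fun j' : Fin N => ‖x j a - x j' a‖)
          (Set.Finite.bddAbove (Set.finite_range _)) i
      have h2 : ‖x i a - x i b‖ ≤ ∫ s in a..b, G s := by
        rw [← norm_neg]; simpa [neg_sub] using hIbound
      calc ‖x j a - x i b‖ ≤ ‖x j a - x i a‖ + ‖x i a - x i b‖ := by
            simpa using norm_add_le (x j a - x i a) (x i a - x i b)
        _ ≤ M := by rw [hMdef]; exact add_le_add h1 h2
    have hM0 : 0 ≤ M := le_trans (norm_nonneg _) (hpair i)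
    -- now bound the ODE right-hand side
    rw [hfx' i t ht0]
    have hterm : ∀ j ∈ Finset.univ.erase i,
        ‖(ψ ‖x i (t - σ) - x j (t - τ)‖ / ((N:ℝ) - 1)) • (x j (t - τ) - x i (t - σ))‖
          ≤ (1 / ((N:ℝ) - 1)) * M := by
      intro j _
      rw [norm_smul]
      have hc0 : 0 ≤ ψ ‖x i (t - σ) - x j (t - τ)‖ / ((N:ℝ) - 1) :=
        div_nonneg (le_of_lt (hψpos _ (norm_nonneg _))) (le_of_lt hN1pos)
      have hc1 : ψ ‖x i (t - σ) - x j (t - τ)‖ / ((N:ℝ) - 1) ≤ 1 / ((N:ℝ) - 1) :=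
        (div_le_div_iff_of_pos_right hN1pos).mpr (hψbdd _ (norm_nonneg _))
      have hv : ‖x j (t - τ) - x i (t - σ)‖ ≤ M := hpair j
      calc ‖ψ ‖x i (t - σ) - x j (t - τ)‖ / ((N:ℝ) - 1)‖ * ‖x j (t - τ) - x i (t - σ)‖
          = (ψ ‖x i (t - σ) - x j (t - τ)‖ / ((N:ℝ) - 1)) * ‖x j (t - τ) - x i (t - σ)‖ := by
            rw [Real.norm_of_nonneg hc0]
        _ ≤ (1 / ((N:ℝ) - 1)) * M :=
            mul_le_mul hc1 hv (norm_nonneg _) (by positivity)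
    calc ‖f i t‖ ≤ ∑ j ∈ Finset.univ.erase i,
          ‖(ψ ‖x i (t - σ) - x j (t - τ)‖ / ((N:ℝ) - 1)) • (x j (t - τ) - x i (t - σ))‖ :=
          norm_sum_le _ _
      _ ≤ ∑ _j ∈ Finset.univ.erase i, (1 / ((N:ℝ) - 1)) * M :=
          Finset.sum_le_sum hterm
      _ = ((N:ℝ) - 1) * ((1 / ((N:ℝ) - 1)) * M) := by
          rw [Finset.sum_const, Finset.card_erase_of_mem (Finset.mem_univ i),
            Finset.card_univ, Fintype.card_fin, nsmul_eq_mul]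
          congr 1
          have : (1:ℕ) ≤ N := by omega
          push_cast [Nat.cast_sub this]
          ring
      _ = M := by field_simp
  -- conclude
  unfold hkMaxDer
  exact ciSup_le key
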